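/- arXiv:1012.3474 — 3 statements merged into one kernel-verified Lean document; each statement's English description precedes it below -/
import Mathlib

section
/- If {A_i} satisfies ∑_i A_i† A_i = I and ∑_i ‖A_i‖_∞² = 1, then each A_i is a scalar multiple of a unitary: A_i = ‖A_i‖_∞ U_i with U_i unitary (assuming A_i ≠ 0). -/
open scoped Matrix.Norms.L2Operator
open Matrix

/-- If `∑ i (A i)ᴴ A i = 1` and `∑ i ‖A i‖² = 1`, then each nonzero `A i` is a scalar
multiple of a unitary: `A i = ‖A i‖ • U i` with `U i` unitary. -/
theorem kraus_sum_sq_opNorm_eq_one_imp_random_unitary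
    (d n : ℕ) (A : Fin n → Matrix (Fin d) (Fin d) ℂ)
    (hKraus : ∑ i, (A i)ᴴ * A i = 1)
    (hsum : ∑ i, ‖A i‖ ^ 2 = 1)
    (hA : ∀ i, A i ≠ 0) :
    ∀ i, ∃ U ∈ Matrix.unitaryGroup (Fin d) ℂ, A i = (‖A i‖ : ℂ) • U := by
  intro i
  set T : Fin n → (EuclideanSpace ℂ (Fin d) →L[ℂ] EuclideanSpace ℂ (Fin d)) :=
    fun j => Matrix.toEuclideanCLM (n := Fin d) (𝕜 := ℂ) (A j) with hT
  have hnormT : ∀ j, ‖T j‖ = ‖A j‖ := fun j => rfl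
  have hco : (RCLike.ofReal : ℝ → ℂ) = Complex.ofReal := rfl
  -- pointwise sum identity
  have h1 : ∑ j, (ContinuousLinearMap.adjoint (T j)).comp (T j) = 1 := by
    have h := congrArg (Matrix.toEuclideanCLM (n := Fin d) (𝕜 := ℂ)) hKraus
    simpa [map_sum, _root_.map_mul, _root_.map_one, ← Matrix.star_eq_conjTranspose,
      map_star, ContinuousLinearMap.star_eq_adjoint, ContinuousLinearMap.mul_def] using h
  have hptsum : ∀ x : EuclideanSpace ℂ (Fin d), ∑ j, ‖T j x‖ ^ 2 = ‖x‖ ^ 2 := by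
    intro x
    have h2 := congrArg (fun S : EuclideanSpace ℂ (Fin d) →L[ℂ] EuclideanSpace ℂ (Fin d) =>
      inner (𝕜 := ℂ) (S x) x) h1
    simp only [ContinuousLinearMap.sum_apply, ContinuousLinearMap.comp_apply,
      ContinuousLinearMap.one_apply, sum_inner] at h2
    have h3 : ∀ j, inner (𝕜 := ℂ) ((ContinuousLinearMap.adjoint (T j)) (T j x)) x
        = (‖T j x‖ : ℂ) ^ 2 := by
      intro j
      rw [ContinuousLinearMap.adjoint_inner_left, inner_self_eq_norm_sq_to_K]
      simp only [hco]
    rw [Finset.sum_congr rfl (fun j _ => h3 j)] at h2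
    rw [inner_self_eq_norm_sq_to_K] at h2
    simp only [hco] at h2
    have h4 : ((∑ j, ‖T j x‖ ^ 2 : ℝ) : ℂ) = ((‖x‖ ^ 2 : ℝ) : ℂ) := by push_cast; exact h2
    exact_mod_cast h4
  -- each term achieves its bound
  have hterm : ∀ x : EuclideanSpace ℂ (Fin d), ‖T i x‖ ^ 2 = ‖A i‖ ^ 2 * ‖x‖ ^ 2 := by
    intro x
    have hle : ∀ j ∈ Finset.univ, ‖T j x‖ ^ 2 ≤ ‖A j‖ ^ 2 * ‖x‖ ^ 2 := by
      intro j _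
      have hb := (T j).le_opNorm x
      rw [hnormT] at hb
      calc ‖T j x‖ ^ 2 ≤ (‖A j‖ * ‖x‖) ^ 2 := by
            apply pow_le_pow_left₀ (norm_nonneg _) hb
        _ = ‖A j‖ ^ 2 * ‖x‖ ^ 2 := by ring
    have hsums : ∑ j, ‖T j x‖ ^ 2 = ∑ j, ‖A j‖ ^ 2 * ‖x‖ ^ 2 := by
      rw [hptsum x, ← Finset.sum_mul, hsum, one_mul]
    exact (Finset.sum_eq_sum_iff_of_le hle).mp hsums i (Finset.mem_univ i)
  -- deduce (A i)ᴴ * A i = ‖A i‖² • 1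
  have hzero : (ContinuousLinearMap.adjoint (T i)).comp (T i) = (((‖A i‖ : ℂ) ^ 2) • 1 :
      EuclideanSpace ℂ (Fin d) →L[ℂ] EuclideanSpace ℂ (Fin d)) := by
    rw [← sub_eq_zero]
    apply ContinuousLinearMap.coe_injective
    have key := (inner_map_self_eq_zero
      (((ContinuousLinearMap.adjoint (T i)).comp (T i) - ((‖A i‖ : ℂ) ^ 2) • 1 :
        EuclideanSpace ℂ (Fin d) →L[ℂ] EuclideanSpace ℂ (Fin d)) :
        EuclideanSpace ℂ (Fin d) →ₗ[ℂ] EuclideanSpace ℂ (Fin d))).mp ?_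
    · simpa using key
    · intro x
      simp only [ContinuousLinearMap.coe_coe, ContinuousLinearMap.sub_apply,
        ContinuousLinearMap.comp_apply, ContinuousLinearMap.smul_apply,
        ContinuousLinearMap.one_apply, inner_sub_left, inner_smul_left,
        ContinuousLinearMap.adjoint_inner_left]
      rw [inner_self_eq_norm_sq_to_K, inner_self_eq_norm_sq_to_K, sub_eq_zero]
      simp only [map_pow, Complex.conj_ofReal, hco]
      exact_mod_cast hterm x
  have hAA : (A i)ᴴ * (A i) = ((‖A i‖ : ℂ) ^ 2) • 1 := by
    apply (Matrix.toEuclideanCLM (n := Fin d) (𝕜 := ℂ)).injective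
    show (Matrix.toEuclideanCLM (n := Fin d) (𝕜 := ℂ)) ((A i)ᴴ * A i)
      = (Matrix.toEuclideanCLM (n := Fin d) (𝕜 := ℂ)) (((‖A i‖ : ℂ) ^ 2) • 1)
    rw [_root_.map_mul]
    have hsm := map_smul (Matrix.toEuclideanCLM (n := Fin d) (𝕜 := ℂ))
      ((‖A i‖ : ℂ) ^ 2) (1 : Matrix (Fin d) (Fin d) ℂ)
    rw [hsm, _root_.map_one]
    have hadj : (Matrix.toEuclideanCLM (n := Fin d) (𝕜 := ℂ)) ((A i)ᴴ)
        = ContinuousLinearMap.adjoint (T i) := by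
      rw [show (A i)ᴴ = star (A i) from rfl, map_star, ContinuousLinearMap.star_eq_adjoint]
    rw [hadj, ContinuousLinearMap.mul_def, hzero]
  -- build the unitary
  have hc : (‖A i‖ : ℂ) ≠ 0 := by
    exact_mod_cast (norm_ne_zero_iff.mpr (hA i))
  refine ⟨(‖A i‖ : ℂ)⁻¹ • A i, ?_, ?_⟩
  · rw [Matrix.mem_unitaryGroup_iff']
    have hstar : star ((‖A i‖ : ℂ)⁻¹ • A i) = (‖A i‖ : ℂ)⁻¹ • (A i)ᴴ := by
      simp [Matrix.star_eq_conjTranspose, star_smul, star_inv₀]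
    rw [hstar, Matrix.smul_mul, Matrix.mul_smul, hAA, smul_smul, smul_smul]
    have hone : ((‖A i‖:ℂ)⁻¹ * (‖A i‖:ℂ)⁻¹ * (‖A i‖:ℂ)^2) = 1 := by
      field_simp
    rw [hone, one_smul]
  · rw [smul_smul, mul_inv_cancel₀ hc, one_smul]
end

section
/- For any two-qubit quantum state ρ, (1/2)(1 − √(1 − C^∩(ρ)²)) ≤ E_G^∩(ρ) ≤ C^∩(ρ)/2, where C^∩(ρ) = max over pure-state ensembles {p_i, ψ_i} of ρ of ∑_i p_i C(ψ_i) and E_G^∩(ρ) = max over pure-state ensembles of ∑_i p_i E_G(ψ_i). -/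
open scoped ComplexOrder

/-- The Pauli matrix `σ_y`. -/
noncomputable def sigmaY : Matrix (Fin 2) (Fin 2) ℂ := !![0, -Complex.I; Complex.I, 0]

/-- The spin-flipped vector `|ψ̃⟩ = (σ_y ⊗ σ_y)|ψ*⟩`. -/
noncomputable def psiTilde (ψ : Fin 2 × Fin 2 → ℂ) : Fin 2 × Fin 2 → ℂ :=
  fun p => ∑ k, ∑ l, sigmaY p.1 k * sigmaY p.2 l * star (ψ (k, l))

/-- The concurrence `C(ψ) = |⟨ψ̃|ψ⟩|` of a two-qubit pure state. -/
noncomputable def concurrence (ψ : Fin 2 × Fin 2 → ℂ) : ℝ :=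
  ‖∑ p : Fin 2 × Fin 2, star (psiTilde ψ p) * ψ p‖

/-- The maximal squared overlap of a bipartite vector with product unit vectors. -/
noncomputable def maxOverlap (d : ℕ) (ψ : Fin d × Fin d → ℂ) : ℝ :=
  sSup {r : ℝ | ∃ α β : Fin d → ℂ, (∑ i, ‖α i‖ ^ 2) = 1 ∧ (∑ j, ‖β j‖ ^ 2) = 1 ∧
    r = ‖∑ p : Fin d × Fin d, star (α p.1 * β p.2) * ψ p‖ ^ 2}

/-- The geometric measure of entanglement of a two-qubit pure state. -/
noncomputable def geomMeasure (ψ : Fin 2 × Fin 2 → ℂ) : ℝ := 1 - maxOverlap 2 ψ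

/-- `IsEnsemble ρ p ψ`: `{p i, ψ i}` is a pure-state ensemble decomposition of `ρ`. -/
def IsEnsemble {n : ℕ} (ρ : Matrix (Fin 2 × Fin 2) (Fin 2 × Fin 2) ℂ)
    (p : Fin n → ℝ) (ψ : Fin n → (Fin 2 × Fin 2 → ℂ)) : Prop :=
  (∀ i, 0 ≤ p i) ∧ (∀ i, (∑ q : Fin 2 × Fin 2, ‖ψ i q‖ ^ 2) = 1) ∧
  (∀ q q', ρ q q' = ∑ i, (p i : ℂ) * (ψ i q * star (ψ i q')))

/-- The concave-roof extension of the concurrence to two-qubit mixed states. -/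
noncomputable def concCap (ρ : Matrix (Fin 2 × Fin 2) (Fin 2 × Fin 2) ℂ) : ℝ :=
  sSup {c : ℝ | ∃ (n : ℕ) (p : Fin n → ℝ) (ψ : Fin n → (Fin 2 × Fin 2 → ℂ)),
    IsEnsemble ρ p ψ ∧ c = ∑ i, p i * concurrence (ψ i)}

/-- The concave-roof extension of the geometric measure of entanglement. -/
noncomputable def geomCap (ρ : Matrix (Fin 2 × Fin 2) (Fin 2 × Fin 2) ℂ) : ℝ :=
  sSup {c : ℝ | ∃ (n : ℕ) (p : Fin n → ℝ) (ψ : Fin n → (Fin 2 × Fin 2 → ℂ)),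
    IsEnsemble ρ p ψ ∧ c = ∑ i, p i * geomMeasure (ψ i)}

/-! ### Auxiliary lemmas -/

lemma aux_sum_prod_expand (g : Fin 2 × Fin 2 → ℂ) :
    ∑ p : Fin 2 × Fin 2, g p = g (0,0) + g (0,1) + g (1,0) + g (1,1) := by
  rw [Fintype.sum_prod_type]; simp [Fin.sum_univ_two]; ring

lemma aux_sum_prod_expand_real (g : Fin 2 × Fin 2 → ℝ) :
    ∑ p : Fin 2 × Fin 2, g p = g (0,0) + g (0,1) + g (1,0) + g (1,1) := by
  rw [Fintype.sum_prod_type]; simp [Fin.sum_univ_two]; ring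

lemma aux_overlap_expand (ψ : Fin 2 × Fin 2 → ℂ) (α β : Fin 2 → ℂ) :
    ∑ pr : Fin 2 × Fin 2, star (α pr.1 * β pr.2) * ψ pr
      = star (α 0) * star (β 0) * ψ (0,0) + star (α 0) * star (β 1) * ψ (0,1)
        + star (α 1) * star (β 0) * ψ (1,0) + star (α 1) * star (β 1) * ψ (1,1) := by
  rw [aux_sum_prod_expand]
  simp only [star_mul]
  ring

lemma aux_concurrence_eq (ψ : Fin 2 × Fin 2 → ℂ) :
    concurrence ψ = 2 * ‖ψ (0,0) * ψ (1,1) - ψ (0,1) * ψ (1,0)‖ := by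
  unfold concurrence
  rw [aux_sum_prod_expand]
  have h : ∀ p : Fin 2 × Fin 2, psiTilde ψ p
      = ∑ k, ∑ l, sigmaY p.1 k * sigmaY p.2 l * star (ψ (k, l)) := fun _ => rfl
  simp only [h, Fin.sum_univ_two, sigmaY]
  simp [Matrix.cons_val_zero, Matrix.cons_val_one]
  have e : -(ψ (1, 1) * ψ (0, 0)) + ψ (1, 0) * ψ (0, 1) + ψ (0, 1) * ψ (1, 0) + -(ψ (0, 0) * ψ (1, 1))
      = -2 * (ψ (0, 0) * ψ (1, 1) - ψ (0, 1) * ψ (1, 0)) := by ring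
  rw [e, norm_mul]
  simp

lemma aux_star_mul_self (z : ℂ) : star z * z = ((‖z‖ ^ 2 : ℝ) : ℂ) := by
  rw [Complex.star_def, ← Complex.normSq_eq_conj_mul_self]
  norm_cast
  rw [← Complex.sq_norm]

lemma aux_concurrence_nonneg (ψ : Fin 2 × Fin 2 → ℂ) : 0 ≤ concurrence ψ := norm_nonneg _

lemma aux_concurrence_le_one (ψ : Fin 2 × Fin 2 → ℂ)
    (hψ : (∑ q : Fin 2 × Fin 2, ‖ψ q‖ ^ 2) = 1) : concurrence ψ ≤ 1 := by
  rw [aux_concurrence_eq]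
  rw [aux_sum_prod_expand_real (fun q => ‖ψ q‖ ^ 2)] at hψ
  have h1 : ‖ψ (0,0) * ψ (1,1) - ψ (0,1) * ψ (1,0)‖
      ≤ ‖ψ (0,0)‖ * ‖ψ (1,1)‖ + ‖ψ (0,1)‖ * ‖ψ (1,0)‖ := by
    calc ‖ψ (0,0) * ψ (1,1) - ψ (0,1) * ψ (1,0)‖
        ≤ ‖ψ (0,0) * ψ (1,1)‖ + ‖ψ (0,1) * ψ (1,0)‖ := norm_sub_le _ _
      _ = ‖ψ (0,0)‖ * ‖ψ (1,1)‖ + ‖ψ (0,1)‖ * ‖ψ (1,0)‖ := by rw [norm_mul, norm_mul]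
  nlinarith [sq_nonneg (‖ψ (0,0)‖ - ‖ψ (1,1)‖), sq_nonneg (‖ψ (0,1)‖ - ‖ψ (1,0)‖)]

lemma aux_cs (x y : Fin 2 × Fin 2 → ℂ) :
    ‖∑ p : Fin 2 × Fin 2, star (x p) * y p‖ ^ 2 ≤
      (∑ p : Fin 2 × Fin 2, ‖x p‖ ^ 2) * (∑ p : Fin 2 × Fin 2, ‖y p‖ ^ 2) := by
  let x' : EuclideanSpace ℂ (Fin 2 × Fin 2) := (WithLp.equiv 2 _).symm x
  let y' : EuclideanSpace ℂ (Fin 2 × Fin 2) := (WithLp.equiv 2 _).symm y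
  have h1 : ‖(inner ℂ x' y' : ℂ)‖ ≤ ‖x'‖ * ‖y'‖ := norm_inner_le_norm x' y'
  have h2 : (inner ℂ x' y' : ℂ) = ∑ p : Fin 2 × Fin 2, star (x p) * y p := by
    rw [PiLp.inner_apply]
    exact Finset.sum_congr rfl fun i _ => by simp [x', y', RCLike.inner_apply, mul_comm]
  have h3 : ‖x'‖ ^ 2 = ∑ p : Fin 2 × Fin 2, ‖x p‖ ^ 2 := by
    rw [EuclideanSpace.norm_eq, Real.sq_sqrt (by positivity)]; rfl
  have h4 : ‖y'‖ ^ 2 = ∑ p : Fin 2 × Fin 2, ‖y p‖ ^ 2 := by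
    rw [EuclideanSpace.norm_eq, Real.sq_sqrt (by positivity)]; rfl
  rw [← h2, ← h3, ← h4]
  calc ‖(inner ℂ x' y' : ℂ)‖ ^ 2 ≤ (‖x'‖ * ‖y'‖) ^ 2 := by
        apply pow_le_pow_left₀ (norm_nonneg _) h1
    _ = ‖x'‖ ^ 2 * ‖y'‖ ^ 2 := by ring

lemma aux_prod_norm_sum (α β : Fin 2 → ℂ) :
    (∑ p : Fin 2 × Fin 2, ‖α p.1 * β p.2‖ ^ 2)
      = (∑ i, ‖α i‖ ^ 2) * (∑ j, ‖β j‖ ^ 2) := by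
  rw [aux_sum_prod_expand_real (fun p => ‖α p.1 * β p.2‖ ^ 2), Fin.sum_univ_two,
    Fin.sum_univ_two]
  simp only [norm_mul, mul_pow]
  ring

lemma aux_real_key (A B C D K : ℝ) (hB : 0 ≤ B) (hC : 0 ≤ C)
    (hK0 : 0 ≤ K) (hK : K ≤ A * D + B * C)
    (hsum : A ^ 2 + B ^ 2 + C ^ 2 + D ^ 2 = 1) :
    A ^ 2 ≤ (1 + Real.sqrt (1 - (2 * K) ^ 2)) / 2 := by
  rcases le_or_gt (A ^ 2) (1 / 2) with h | h
  · have := Real.sqrt_nonneg (1 - (2 * K) ^ 2)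
    linarith
  · have h2b : 0 ≤ 2 * A ^ 2 - 2 * A * D - B * C := by
      nlinarith [sq_nonneg (A - D), sq_nonneg (B - C)]
    have hkey : (A * D + B * C) ^ 2 ≤ A ^ 2 * (B ^ 2 + C ^ 2 + D ^ 2) := by
      nlinarith [sq_nonneg (A * B - A * C), mul_nonneg (mul_nonneg hB hC) h2b]
    have hK2 : K ^ 2 ≤ A ^ 2 * (1 - A ^ 2) := by nlinarith
    have h4 : (2 * A ^ 2 - 1) ^ 2 ≤ 1 - (2 * K) ^ 2 := by nlinarith
    have h5 : (2 * A ^ 2 - 1 : ℝ) ≤ Real.sqrt (1 - (2 * K) ^ 2) := by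
      have := Real.sqrt_le_sqrt h4
      rwa [Real.sqrt_sq (by linarith)] at this
    linarith

/-- Upper bound on the squared overlap with a product state. -/
lemma aux_overlap_sq_le (ψ : Fin 2 × Fin 2 → ℂ) (α β : Fin 2 → ℂ)
    (hψ : (∑ q : Fin 2 × Fin 2, ‖ψ q‖ ^ 2) = 1)
    (hα : (∑ i, ‖α i‖ ^ 2) = 1) (hβ : (∑ j, ‖β j‖ ^ 2) = 1) :
    ‖∑ p : Fin 2 × Fin 2, star (α p.1 * β p.2) * ψ p‖ ^ 2 ≤
      (1 + Real.sqrt (1 - concurrence ψ ^ 2)) / 2 := by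
  have hαc : star (α 0) * α 0 + star (α 1) * α 1 = 1 := by
    rw [aux_star_mul_self, aux_star_mul_self, ← Complex.ofReal_add]
    rw [Fin.sum_univ_two] at hα
    rw [hα]; norm_num
  have hβc : star (β 0) * β 0 + star (β 1) * β 1 = 1 := by
    rw [aux_star_mul_self, aux_star_mul_self, ← Complex.ofReal_add]
    rw [Fin.sum_univ_two] at hβ
    rw [hβ]; norm_num
  have hψc : star (ψ (0,0)) * ψ (0,0) + star (ψ (0,1)) * ψ (0,1)
      + star (ψ (1,0)) * ψ (1,0) + star (ψ (1,1)) * ψ (1,1) = 1 := by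
    simp only [aux_star_mul_self, ← Complex.ofReal_add]
    rw [aux_sum_prod_expand_real (fun q => ‖ψ q‖ ^ 2)] at hψ
    rw [hψ]; norm_num
  set a := star (α 0) * star (β 0) * ψ (0,0) + star (α 0) * star (β 1) * ψ (0,1)
      + star (α 1) * star (β 0) * ψ (1,0) + star (α 1) * star (β 1) * ψ (1,1) with ha
  set b := star (α 0) * (-(β 1)) * ψ (0,0) + star (α 0) * (β 0) * ψ (0,1)
      + star (α 1) * (-(β 1)) * ψ (1,0) + star (α 1) * (β 0) * ψ (1,1) with hb
  set c := (-(α 1)) * star (β 0) * ψ (0,0) + (-(α 1)) * star (β 1) * ψ (0,1)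
      + (α 0) * star (β 0) * ψ (1,0) + (α 0) * star (β 1) * ψ (1,1) with hc
  set d := (-(α 1)) * (-(β 1)) * ψ (0,0) + (-(α 1)) * (β 0) * ψ (0,1)
      + (α 0) * (-(β 1)) * ψ (1,0) + (α 0) * (β 0) * ψ (1,1) with hd
  have hgoal : (∑ p : Fin 2 × Fin 2, star (α p.1 * β p.2) * ψ p) = a := by
    rw [aux_sum_prod_expand]
    simp only [ha, star_mul]
    ring
  have hP : ((‖a‖ ^ 2 + ‖b‖ ^ 2 + ‖c‖ ^ 2 + ‖d‖ ^ 2 : ℝ) : ℂ) = 1 := by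
    rw [Complex.ofReal_add, Complex.ofReal_add, Complex.ofReal_add,
      ← aux_star_mul_self a, ← aux_star_mul_self b, ← aux_star_mul_self c, ← aux_star_mul_self d]
    calc star a * a + star b * b + star c * c + star d * d
        = (star (α 0) * α 0 + star (α 1) * α 1) * (star (β 0) * β 0 + star (β 1) * β 1)
          * (star (ψ (0,0)) * ψ (0,0) + star (ψ (0,1)) * ψ (0,1)
            + star (ψ (1,0)) * ψ (1,0) + star (ψ (1,1)) * ψ (1,1)) := by
          simp only [ha, hb, hc, hd, star_add, star_mul, star_neg, star_star]
          ring
      _ = 1 := by rw [hαc, hβc, hψc]; ring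
  have hPr : ‖a‖ ^ 2 + ‖b‖ ^ 2 + ‖c‖ ^ 2 + ‖d‖ ^ 2 = 1 := by exact_mod_cast hP
  have hD : a * d - b * c = ψ (0,0) * ψ (1,1) - ψ (0,1) * ψ (1,0) := by
    calc a * d - b * c
        = (star (α 0) * α 0 + star (α 1) * α 1) * (star (β 0) * β 0 + star (β 1) * β 1)
          * (ψ (0,0) * ψ (1,1) - ψ (0,1) * ψ (1,0)) := by ring
      _ = _ := by rw [hαc, hβc]; ring
  have hCeq : concurrence ψ = 2 * ‖a * d - b * c‖ := by rw [aux_concurrence_eq, hD]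
  rw [hgoal, hCeq]
  have htri : ‖a * d - b * c‖ ≤ ‖a‖ * ‖d‖ + ‖b‖ * ‖c‖ := by
    calc ‖a * d - b * c‖ ≤ ‖a * d‖ + ‖b * c‖ := norm_sub_le _ _
      _ = ‖a‖ * ‖d‖ + ‖b‖ * ‖c‖ := by rw [norm_mul, norm_mul]
  exact aux_real_key ‖a‖ ‖b‖ ‖c‖ ‖d‖ ‖a * d - b * c‖ (norm_nonneg _) (norm_nonneg _)
    (norm_nonneg _) htri hPr

set_option maxHeartbeats 1000000 in
/-- There is a product state achieving squared overlap at least `1 - C(ψ)/2`. -/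
lemma aux_exists_overlap_ge (ψ : Fin 2 × Fin 2 → ℂ)
    (hψ : (∑ q : Fin 2 × Fin 2, ‖ψ q‖ ^ 2) = 1) :
    ∃ α β : Fin 2 → ℂ, (∑ i, ‖α i‖ ^ 2) = 1 ∧ (∑ j, ‖β j‖ ^ 2) = 1 ∧
      1 - concurrence ψ / 2 ≤ ‖∑ p : Fin 2 × Fin 2, star (α p.1 * β p.2) * ψ p‖ ^ 2 := by
  set p : ℝ := ‖ψ (0,0)‖ ^ 2 + ‖ψ (1,0)‖ ^ 2 with hpdef
  set q : ℝ := ‖ψ (0,1)‖ ^ 2 + ‖ψ (1,1)‖ ^ 2 with hqdef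
  set t : ℂ := star (ψ (0,0)) * ψ (0,1) + star (ψ (1,0)) * ψ (1,1) with htdef
  have hpq : p + q = 1 := by
    rw [aux_sum_prod_expand_real (fun r => ‖ψ r‖ ^ 2)] at hψ
    rw [hpdef, hqdef]; linarith
  have hp0 : 0 ≤ p := by positivity
  have hq0 : 0 ≤ q := by positivity
  have hpc : ((p : ℝ) : ℂ) = star (ψ (0,0)) * ψ (0,0) + star (ψ (1,0)) * ψ (1,0) := by
    rw [hpdef, Complex.ofReal_add, ← aux_star_mul_self, ← aux_star_mul_self]
  have hqc : ((q : ℝ) : ℂ) = star (ψ (0,1)) * ψ (0,1) + star (ψ (1,1)) * ψ (1,1) := by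
    rw [hqdef, Complex.ofReal_add, ← aux_star_mul_self, ← aux_star_mul_self]
  set dH : ℝ := p * q - ‖t‖ ^ 2 with hdHdef
  have hdet : dH = ‖ψ (0,0) * ψ (1,1) - ψ (0,1) * ψ (1,0)‖ ^ 2 := by
    have hcc : ((dH : ℝ) : ℂ) = ((‖ψ (0,0) * ψ (1,1) - ψ (0,1) * ψ (1,0)‖ ^ 2 : ℝ) : ℂ) := by
      rw [hdHdef, ← aux_star_mul_self, Complex.ofReal_sub, Complex.ofReal_mul, hpc, hqc,
        ← aux_star_mul_self]
      simp only [htdef, star_add, star_mul, star_star, star_sub]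
      ring
    exact_mod_cast hcc
  have hdH0 : 0 ≤ dH := by rw [hdet]; positivity
  have hRnn : 0 ≤ 1 - 4 * dH := by
    have h1 : 1 - 4 * dH = (p - q) ^ 2 + 4 * ‖t‖ ^ 2 := by
      rw [hdHdef]; nlinarith [hpq]
    rw [h1]; positivity
  set R : ℝ := Real.sqrt (1 - 4 * dH) with hRdef
  have hR0 : 0 ≤ R := Real.sqrt_nonneg _
  have hR2 : R ^ 2 = 1 - 4 * dH := Real.sq_sqrt hRnn
  set lam : ℝ := (1 + R) / 2 with hlamdef
  have hchar : lam ^ 2 - lam + dH = 0 := by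
    rw [hlamdef]; nlinarith [hR2]
  have hlamhalf : 1 / 2 ≤ lam := by rw [hlamdef]; linarith
  have hfin : 1 - Real.sqrt dH ≤ lam := by
    set s := Real.sqrt dH with hsdef
    have hs0 : 0 ≤ s := Real.sqrt_nonneg _
    have hs2 : s ^ 2 = dH := Real.sq_sqrt hdH0
    rcases le_or_gt (1 - 2 * s) 0 with h | h
    · linarith
    · have hsq : (1 - 2*s) ≤ R := by
        have h2 : (1 - 2*s)^2 ≤ 1 - 4 * dH := by nlinarith
        calc 1 - 2*s = Real.sqrt ((1 - 2*s)^2) := (Real.sqrt_sq (by linarith)).symm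
          _ ≤ R := by rw [hRdef]; exact Real.sqrt_le_sqrt h2
      rw [hlamdef]; linarith
  have hChalf : concurrence ψ / 2 = Real.sqrt dH := by
    rw [aux_concurrence_eq, hdet, Real.sqrt_sq (norm_nonneg _)]; ring
  suffices h : ∃ α β : Fin 2 → ℂ, (∑ i, ‖α i‖ ^ 2) = 1 ∧ (∑ j, ‖β j‖ ^ 2) = 1 ∧
      ‖∑ pr : Fin 2 × Fin 2, star (α pr.1 * β pr.2) * ψ pr‖ ^ 2 = lam by
    obtain ⟨α, β, h1, h2, h3⟩ := h
    exact ⟨α, β, h1, h2, by rw [h3, hChalf]; exact hfin⟩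
  set L : ℝ := lam - p with hLdef
  set nv : ℝ := ‖t‖ ^ 2 + L ^ 2 with hnvdef
  rcases eq_or_ne nv 0 with hnv | hnv
  · -- degenerate case : t = 0, lam = p
    have ht0 : t = 0 := by
      have h1 : ‖t‖ ^ 2 = 0 := by nlinarith [sq_nonneg L, sq_nonneg ‖t‖]
      simpa using h1
    have hL0 : L = 0 := by nlinarith [sq_nonneg L, sq_nonneg ‖t‖]
    have hlp : lam = p := by rw [hLdef] at hL0; linarith
    have hppos : 0 < p := by rw [← hlp]; linarith
    have hsp : Real.sqrt p ^ 2 = p := Real.sq_sqrt hp0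
    have hsppos : 0 < Real.sqrt p := Real.sqrt_pos.mpr hppos
    refine ⟨![ψ (0,0) / (Real.sqrt p : ℂ), ψ (1,0) / (Real.sqrt p : ℂ)], ![1, 0], ?_, ?_, ?_⟩
    · rw [Fin.sum_univ_two]
      simp only [Matrix.cons_val_zero, Matrix.cons_val_one, Matrix.head_cons, norm_div,
        Complex.norm_real, Real.norm_eq_abs, abs_of_nonneg (Real.sqrt_nonneg p)]
      rw [div_pow, div_pow, ← add_div, hsp]
      show p / p = 1
      exact div_self (ne_of_gt hppos)
    · rw [Fin.sum_univ_two]; simp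
    · rw [aux_overlap_expand]
      simp only [Matrix.cons_val_zero, Matrix.cons_val_one, Matrix.head_cons, star_one, star_zero,
        mul_one, mul_zero, zero_mul, add_zero]
      have h2 : star (ψ (0, 0) / (Real.sqrt p : ℂ)) * ψ (0, 0) +
          star (ψ (1, 0) / (Real.sqrt p : ℂ)) * ψ (1, 0)
          = (star (ψ (0,0)) * ψ (0,0) + star (ψ (1,0)) * ψ (1,0)) / (Real.sqrt p : ℂ) := by
        simp only [star_div₀, Complex.star_def, Complex.conj_ofReal]
        ring
      rw [h2, ← hpc]
      rw [show ((p:ℝ):ℂ) / ((Real.sqrt p : ℝ):ℂ) = ((p / Real.sqrt p : ℝ) : ℂ) by push_cast; ring]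
      rw [Complex.norm_real, Real.norm_eq_abs, abs_of_nonneg (by positivity), hlp]
      rw [div_pow, hsp, pow_two, mul_self_div_self]
  · -- main case
    have hnvpos : 0 < nv := lt_of_le_of_ne (by positivity) (Ne.symm hnv)
    set w0 : ℂ := ψ (0,0) * t + ψ (0,1) * (L : ℂ) with hw0def
    set w1 : ℂ := ψ (1,0) * t + ψ (1,1) * (L : ℂ) with hw1def
    have hQ : ‖w0‖ ^ 2 + ‖w1‖ ^ 2 = lam * nv := by
      have hchar' : lam ^ 2 - lam + (p * q - ‖t‖ ^ 2) = 0 := by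
        rw [hdHdef] at hchar; exact hchar
      have hreal : lam * nv = ‖t‖^2 * (p + 2*L) + L^2 * q := by
        rw [hnvdef, hLdef]
        linear_combination (lam - p) * hchar' - (lam - p) * lam * hpq
      have htt : (star t) * t = ((‖t‖^2 : ℝ) : ℂ) := aux_star_mul_self t
      have hcc : ((‖w0‖ ^ 2 + ‖w1‖ ^ 2 : ℝ) : ℂ) = ((lam * nv : ℝ) : ℂ) := by
        rw [Complex.ofReal_add, ← aux_star_mul_self, ← aux_star_mul_self, hreal]
        have hrhs : ((‖t‖^2 * (p + 2*L) + L^2 * q : ℝ) : ℂ)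
            = star t * t * ((p:ℂ) + 2 * (L:ℂ)) + (L:ℂ)^2 * (q:ℂ) := by
          rw [htt]; push_cast; ring
        rw [hrhs, hpc, hqc]
        simp only [hw0def, hw1def, htdef, star_add, star_mul, star_star, Complex.star_def,
          Complex.conj_ofReal, Complex.conj_conj, map_add, map_mul]
        ring
      exact_mod_cast hcc
    set nw : ℝ := Real.sqrt (lam * nv) with hnwdef
    set snv : ℝ := Real.sqrt nv with hsnvdef
    have hlampos : 0 < lam := by linarith
    have hlnv : 0 < lam * nv := by positivity
    have hnw2 : nw ^ 2 = lam * nv := Real.sq_sqrt (le_of_lt hlnv)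
    have hsnv2 : snv ^ 2 = nv := Real.sq_sqrt (le_of_lt hnvpos)
    have hnwpos : 0 < nw := Real.sqrt_pos.mpr hlnv
    have hsnvpos : 0 < snv := Real.sqrt_pos.mpr hnvpos
    refine ⟨![w0 / (nw : ℂ), w1 / (nw : ℂ)], ![star t / (snv : ℂ), (L : ℂ) / (snv : ℂ)],
      ?_, ?_, ?_⟩
    · rw [Fin.sum_univ_two]
      simp only [Matrix.cons_val_zero, Matrix.cons_val_one, Matrix.head_cons, norm_div,
        Complex.norm_real, Real.norm_eq_abs, abs_of_nonneg (Real.sqrt_nonneg _)]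
      rw [div_pow, div_pow, ← add_div, hQ]
      rw [abs_of_pos hnwpos, show nw ^ 2 = lam * nv from hnw2]
      exact div_self (ne_of_gt hlnv)
    · rw [Fin.sum_univ_two]
      simp only [Matrix.cons_val_zero, Matrix.cons_val_one, Matrix.head_cons, norm_div,
        Complex.norm_real, Real.norm_eq_abs, abs_of_nonneg (Real.sqrt_nonneg _), norm_star]
      rw [div_pow, div_pow, ← add_div]
      rw [sq_abs, ← hnvdef]
      rw [abs_of_pos hsnvpos, show snv ^ 2 = nv from hsnv2]
      exact div_self (ne_of_gt hnvpos)
    · rw [aux_overlap_expand]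
      simp only [Matrix.cons_val_zero, Matrix.cons_val_one, Matrix.head_cons]
      have hF : star (w0 / (nw:ℂ)) * star (star t / (snv:ℂ)) * ψ (0,0)
          + star (w0 / (nw:ℂ)) * star ((L:ℂ) / (snv:ℂ)) * ψ (0,1)
          + star (w1 / (nw:ℂ)) * star (star t / (snv:ℂ)) * ψ (1,0)
          + star (w1 / (nw:ℂ)) * star ((L:ℂ) / (snv:ℂ)) * ψ (1,1)
          = (star w0 * w0 + star w1 * w1) / ((nw:ℂ) * (snv:ℂ)) := by
        simp only [star_div₀, star_star, Complex.star_def, Complex.conj_ofReal, hw0def, hw1def]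
        simp only [map_add, map_mul, Complex.conj_conj, Complex.conj_ofReal]
        ring
      rw [hF]
      have hval : (star w0 * w0 + star w1 * w1) = ((lam * nv : ℝ) : ℂ) := by
        rw [aux_star_mul_self, aux_star_mul_self, ← Complex.ofReal_add, hQ]
      rw [hval]
      rw [show ((lam * nv : ℝ) : ℂ) / ((nw:ℂ) * (snv:ℂ)) = ((lam * nv / (nw * snv) : ℝ) : ℂ) by
        push_cast; ring]
      rw [Complex.norm_real, Real.norm_eq_abs, abs_of_nonneg (by positivity)]
      rw [div_pow, show ((nw * snv) ^ 2 : ℝ) = lam * nv * nv from by rw [mul_pow, hnw2, hsnv2],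
        show ((lam * nv) ^ 2 : ℝ) = lam * nv * nv * lam from by ring]
      exact mul_div_cancel_left₀ _ (by positivity)

/-- The elements of the overlap set are bounded by `1` for a normalized state. -/
lemma aux_overlap_set_le_one (ψ : Fin 2 × Fin 2 → ℂ)
    (hψ : (∑ q : Fin 2 × Fin 2, ‖ψ q‖ ^ 2) = 1) :
    ∀ r ∈ {r : ℝ | ∃ α β : Fin 2 → ℂ, (∑ i, ‖α i‖ ^ 2) = 1 ∧ (∑ j, ‖β j‖ ^ 2) = 1 ∧
      r = ‖∑ p : Fin 2 × Fin 2, star (α p.1 * β p.2) * ψ p‖ ^ 2}, r ≤ 1 := by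
  rintro r ⟨α, β, hα, hβ, rfl⟩
  calc ‖∑ p : Fin 2 × Fin 2, star (α p.1 * β p.2) * ψ p‖ ^ 2
      ≤ (∑ p : Fin 2 × Fin 2, ‖α p.1 * β p.2‖ ^ 2) * (∑ p : Fin 2 × Fin 2, ‖ψ p‖ ^ 2) :=
        aux_cs _ _
    _ = 1 := by rw [aux_prod_norm_sum, hα, hβ, hψ]; norm_num

lemma aux_maxOverlap_le_one (ψ : Fin 2 × Fin 2 → ℂ)
    (hψ : (∑ q : Fin 2 × Fin 2, ‖ψ q‖ ^ 2) = 1) : maxOverlap 2 ψ ≤ 1 :=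
  Real.sSup_le (aux_overlap_set_le_one ψ hψ) zero_le_one

lemma aux_geomMeasure_nonneg (ψ : Fin 2 × Fin 2 → ℂ)
    (hψ : (∑ q : Fin 2 × Fin 2, ‖ψ q‖ ^ 2) = 1) : 0 ≤ geomMeasure ψ := by
  have := aux_maxOverlap_le_one ψ hψ
  unfold geomMeasure; linarith

/-- `E_G(ψ) ≤ C(ψ)/2` for a normalized two-qubit pure state. -/
lemma aux_geomMeasure_le (ψ : Fin 2 × Fin 2 → ℂ)
    (hψ : (∑ q : Fin 2 × Fin 2, ‖ψ q‖ ^ 2) = 1) :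
    geomMeasure ψ ≤ concurrence ψ / 2 := by
  obtain ⟨α, β, hα, hβ, hr⟩ := aux_exists_overlap_ge ψ hψ
  have hmem : ‖∑ p : Fin 2 × Fin 2, star (α p.1 * β p.2) * ψ p‖ ^ 2 ∈
      {r : ℝ | ∃ α β : Fin 2 → ℂ, (∑ i, ‖α i‖ ^ 2) = 1 ∧ (∑ j, ‖β j‖ ^ 2) = 1 ∧
        r = ‖∑ p : Fin 2 × Fin 2, star (α p.1 * β p.2) * ψ p‖ ^ 2} :=
    ⟨α, β, hα, hβ, rfl⟩
  have hle : ‖∑ p : Fin 2 × Fin 2, star (α p.1 * β p.2) * ψ p‖ ^ 2 ≤ maxOverlap 2 ψ :=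
    le_csSup ⟨1, fun x hx => aux_overlap_set_le_one ψ hψ x hx⟩ hmem
  unfold geomMeasure
  linarith

/-- `(1 - √(1 - C(ψ)²))/2 ≤ E_G(ψ)` for a normalized two-qubit pure state. -/
lemma aux_geomMeasure_ge (ψ : Fin 2 × Fin 2 → ℂ)
    (hψ : (∑ q : Fin 2 × Fin 2, ‖ψ q‖ ^ 2) = 1) :
    (1 - Real.sqrt (1 - concurrence ψ ^ 2)) / 2 ≤ geomMeasure ψ := by
  have h1 : maxOverlap 2 ψ ≤ (1 + Real.sqrt (1 - concurrence ψ ^ 2)) / 2 := by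
    apply Real.sSup_le
    · rintro r ⟨α, β, hα, hβ, rfl⟩
      exact aux_overlap_sq_le ψ α β hψ hα hβ
    · positivity
  unfold geomMeasure
  linarith

lemma aux_sqrt_concave :
    ConcaveOn ℝ (Set.Icc (0:ℝ) 1) (fun c => Real.sqrt (1 - c ^ 2)) := by
  constructor
  · exact convex_Icc 0 1
  · rintro x ⟨hx0, hx1⟩ y ⟨hy0, hy1⟩ a b ha hb hab
    simp only [smul_eq_mul]
    have hx2 : 0 ≤ 1 - x ^ 2 := by nlinarith
    have hy2 : 0 ≤ 1 - y ^ 2 := by nlinarith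
    have hsx := Real.sq_sqrt hx2
    have hsy := Real.sq_sqrt hy2
    have hsx0 := Real.sqrt_nonneg (1 - x ^ 2)
    have hsy0 := Real.sqrt_nonneg (1 - y ^ 2)
    have hprod : Real.sqrt (1 - x ^ 2) * Real.sqrt (1 - y ^ 2) ≤ 1 - x * y := by
      rw [← Real.sqrt_mul hx2]
      have h1 : (1 - x ^ 2) * (1 - y ^ 2) ≤ (1 - x * y) ^ 2 := by nlinarith [sq_nonneg (x - y)]
      calc Real.sqrt ((1 - x ^ 2) * (1 - y ^ 2)) ≤ Real.sqrt ((1 - x * y) ^ 2) :=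
            Real.sqrt_le_sqrt h1
        _ = 1 - x * y := Real.sqrt_sq (by nlinarith)
    have hLHS0 : 0 ≤ a * Real.sqrt (1 - x ^ 2) + b * Real.sqrt (1 - y ^ 2) := by positivity
    have hu1 : a * x + b * y ≤ 1 := by nlinarith
    have hu0 : 0 ≤ a * x + b * y := by positivity
    have hy' : 0 ≤ 1 - (a * x + b * y) ^ 2 := by nlinarith
    refine (Real.le_sqrt hLHS0 hy').mpr ?_
    have hexp : (a * Real.sqrt (1 - x ^ 2) + b * Real.sqrt (1 - y ^ 2)) ^ 2
        = a ^ 2 * (1 - x ^ 2) + b ^ 2 * (1 - y ^ 2)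
          + 2 * a * b * (Real.sqrt (1 - x ^ 2) * Real.sqrt (1 - y ^ 2)) := by
      ring_nf
      nlinarith [hsx, hsy]
    rw [hexp]
    nlinarith [mul_nonneg (mul_nonneg ha hb) (mul_nonneg hsx0 hsy0), mul_nonneg ha hb]

def aux_idx : Fin 4 → Fin 2 × Fin 2 := ![(0,0),(0,1),(1,0),(1,1)]

lemma aux_sum_idx (F : Fin 2 × Fin 2 → ℂ) :
    ∑ j : Fin 2 × Fin 2, F j = ∑ i : Fin 4, F (aux_idx i) := by
  rw [Fintype.sum_prod_type, Fin.sum_univ_four]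
  simp [Fin.sum_univ_two, aux_idx]
  ring

set_option maxHeartbeats 1000000 in
lemma aux_exists_ensemble (ρ : Matrix (Fin 2 × Fin 2) (Fin 2 × Fin 2) ℂ)
    (hρ : ρ.PosSemidef) :
    ∃ (p : Fin 4 → ℝ) (ψ : Fin 4 → (Fin 2 × Fin 2 → ℂ)), IsEnsemble ρ p ψ := by
  have hherm : ρ.IsHermitian := hρ.1
  refine ⟨fun i => hherm.eigenvalues (aux_idx i),
    fun i => (hherm.eigenvectorBasis (aux_idx i) : Fin 2 × Fin 2 → ℂ), ?_, ?_, ?_⟩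
  · intro i; exact hρ.eigenvalues_nonneg (aux_idx i)
  · intro i
    have h1 : ‖hherm.eigenvectorBasis (aux_idx i)‖ = 1 :=
      hherm.eigenvectorBasis.orthonormal.1 (aux_idx i)
    rw [EuclideanSpace.norm_eq] at h1
    have h2 := congrArg (fun r : ℝ => r ^ 2) h1
    simp only at h2
    rwa [Real.sq_sqrt (Finset.sum_nonneg fun q _ => sq_nonneg _), one_pow] at h2
  · intro q q'
    have hentry : ρ q q' = ∑ j : Fin 2 × Fin 2, (hherm.eigenvalues j : ℂ)
        * ((hherm.eigenvectorBasis j : Fin 2 × Fin 2 → ℂ) q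
          * star ((hherm.eigenvectorBasis j : Fin 2 × Fin 2 → ℂ) q')) := by
      conv_lhs => rw [hherm.spectral_theorem, Unitary.conjStarAlgAut_apply]
      rw [Matrix.mul_apply]
      simp only [Matrix.mul_diagonal, Matrix.star_apply,
        Matrix.IsHermitian.eigenvectorUnitary_apply, Function.comp_apply,
        RCLike.ofReal_alg, smul_eq_mul, Complex.coe_algebraMap]
      refine Finset.sum_congr rfl fun l _ => ?_
      ring
    rw [hentry, aux_sum_idx]

lemma aux_ensemble_sum_p {n : ℕ} {ρ : Matrix (Fin 2 × Fin 2) (Fin 2 × Fin 2) ℂ}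
    {p : Fin n → ℝ} {ψ : Fin n → (Fin 2 × Fin 2 → ℂ)}
    (h : IsEnsemble ρ p ψ) (htr : ρ.trace = 1) : ∑ i, p i = 1 := by
  obtain ⟨h0, hnorm, hdec⟩ := h
  have htr' : (∑ q : Fin 2 × Fin 2, ρ q q) = 1 := htr
  have hcc : ((∑ i, p i : ℝ) : ℂ) = 1 := by
    rw [← htr']
    push_cast
    calc (∑ i, (p i : ℂ)) = ∑ i, (p i : ℂ) * ((∑ q : Fin 2 × Fin 2, ‖ψ i q‖ ^ 2 : ℝ) : ℂ) := by
          refine Finset.sum_congr rfl fun i _ => ?_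
          rw [hnorm i]; norm_num
      _ = ∑ i, ∑ q : Fin 2 × Fin 2, (p i : ℂ) * (ψ i q * star (ψ i q)) := by
          refine Finset.sum_congr rfl fun i _ => ?_
          push_cast
          rw [Finset.mul_sum]
          refine Finset.sum_congr rfl fun q _ => ?_
          rw [mul_comm (ψ i q), aux_star_mul_self, Complex.ofReal_pow]
      _ = ∑ q : Fin 2 × Fin 2, ∑ i, (p i : ℂ) * (ψ i q * star (ψ i q)) := Finset.sum_comm
      _ = ∑ q : Fin 2 × Fin 2, ρ q q := by
          refine Finset.sum_congr rfl fun q _ => (hdec q q).symm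
  exact_mod_cast hcc

/-- For any two-qubit state `ρ`,
`(1 - √(1 - C^∩(ρ)²))/2 ≤ E_G^∩(ρ) ≤ C^∩(ρ)/2`. -/
theorem geomCap_bounds_of_concCap
    (ρ : Matrix (Fin 2 × Fin 2) (Fin 2 × Fin 2) ℂ)
    (hρ : ρ.PosSemidef) (htr : ρ.trace = 1) :
    (1 - Real.sqrt (1 - concCap ρ ^ 2)) / 2 ≤ geomCap ρ ∧
    geomCap ρ ≤ concCap ρ / 2 := by
  obtain ⟨p₀, ψ₀, hE₀⟩ := aux_exists_ensemble ρ hρ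
  set SC := {c : ℝ | ∃ (n : ℕ) (p : Fin n → ℝ) (ψ : Fin n → (Fin 2 × Fin 2 → ℂ)),
    IsEnsemble ρ p ψ ∧ c = ∑ i, p i * concurrence (ψ i)} with hSCdef
  set SG := {c : ℝ | ∃ (n : ℕ) (p : Fin n → ℝ) (ψ : Fin n → (Fin 2 × Fin 2 → ℂ)),
    IsEnsemble ρ p ψ ∧ c = ∑ i, p i * geomMeasure (ψ i)} with hSGdef
  have hconcCap : concCap ρ = sSup SC := rfl
  have hgeomCap : geomCap ρ = sSup SG := rfl
  have hCel : ∀ c ∈ SC, 0 ≤ c ∧ c ≤ 1 := by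
    rintro c ⟨n, p, ψ, hE, rfl⟩
    have hs := aux_ensemble_sum_p hE htr
    constructor
    · exact Finset.sum_nonneg fun i _ => mul_nonneg (hE.1 i) (aux_concurrence_nonneg _)
    · calc ∑ i, p i * concurrence (ψ i) ≤ ∑ i, p i * 1 :=
            Finset.sum_le_sum fun i _ =>
              mul_le_mul_of_nonneg_left (aux_concurrence_le_one _ (hE.2.1 i)) (hE.1 i)
        _ = 1 := by simpa using hs
  have hGel : ∀ g ∈ SG, 0 ≤ g ∧ g ≤ 1 := by
    rintro g ⟨n, p, ψ, hE, rfl⟩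
    have hs := aux_ensemble_sum_p hE htr
    constructor
    · exact Finset.sum_nonneg fun i _ =>
        mul_nonneg (hE.1 i) (aux_geomMeasure_nonneg _ (hE.2.1 i))
    · calc ∑ i, p i * geomMeasure (ψ i) ≤ ∑ i, p i * 1 := by
            refine Finset.sum_le_sum fun i _ => mul_le_mul_of_nonneg_left ?_ (hE.1 i)
            have h1 := aux_geomMeasure_le _ (hE.2.1 i)
            have h2 := aux_concurrence_le_one _ (hE.2.1 i)
            linarith
        _ = 1 := by simpa using hs
  have hCbdd : BddAbove SC := ⟨1, fun c hc => (hCel c hc).2⟩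
  have hGbdd : BddAbove SG := ⟨1, fun g hg => (hGel g hg).2⟩
  have hCmem₀ : (∑ i, p₀ i * concurrence (ψ₀ i)) ∈ SC := ⟨4, p₀, ψ₀, hE₀, rfl⟩
  have hGmem₀ : (∑ i, p₀ i * geomMeasure (ψ₀ i)) ∈ SG := ⟨4, p₀, ψ₀, hE₀, rfl⟩
  have hC0 : 0 ≤ concCap ρ := by
    rw [hconcCap]
    exact le_trans (hCel _ hCmem₀).1 (le_csSup hCbdd hCmem₀)
  have hG0 : 0 ≤ geomCap ρ := by
    rw [hgeomCap]
    exact le_trans (hGel _ hGmem₀).1 (le_csSup hGbdd hGmem₀)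
  -- upper bound
  have hupper : geomCap ρ ≤ concCap ρ / 2 := by
    rw [hgeomCap]
    apply Real.sSup_le
    · rintro x ⟨n, p, ψ, hE, rfl⟩
      have h1 : ∑ i, p i * geomMeasure (ψ i) ≤ ∑ i, p i * (concurrence (ψ i) / 2) :=
        Finset.sum_le_sum fun i _ =>
          mul_le_mul_of_nonneg_left (aux_geomMeasure_le _ (hE.2.1 i)) (hE.1 i)
      have h2 : (∑ i, p i * concurrence (ψ i)) ≤ concCap ρ := by
        rw [hconcCap]; exact le_csSup hCbdd ⟨n, p, ψ, hE, rfl⟩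
      have h3 : ∑ i, p i * (concurrence (ψ i) / 2) = (∑ i, p i * concurrence (ψ i)) / 2 := by
        rw [Finset.sum_div]
        exact Finset.sum_congr rfl fun i _ => by ring
      rw [h3] at h1
      linarith
    · linarith
  -- lower bound
  have hkey : ∀ c ∈ SC, (1 - Real.sqrt (1 - c ^ 2)) / 2 ≤ geomCap ρ := by
    rintro c ⟨n, p, ψ, hE, rfl⟩
    have hs := aux_ensemble_sum_p hE htr
    have hjensen : ∑ i, p i * Real.sqrt (1 - concurrence (ψ i) ^ 2)
        ≤ Real.sqrt (1 - (∑ i, p i * concurrence (ψ i)) ^ 2) := by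
      have h := aux_sqrt_concave.le_map_sum (t := Finset.univ) (w := p)
        (p := fun i => concurrence (ψ i)) (fun i _ => hE.1 i) (by simpa using hs)
        (fun i _ => ⟨aux_concurrence_nonneg _, aux_concurrence_le_one _ (hE.2.1 i)⟩)
      simpa [smul_eq_mul] using h
    have h1 : ∑ i, p i * ((1 - Real.sqrt (1 - concurrence (ψ i) ^ 2)) / 2)
        ≤ ∑ i, p i * geomMeasure (ψ i) :=
      Finset.sum_le_sum fun i _ =>
        mul_le_mul_of_nonneg_left (aux_geomMeasure_ge _ (hE.2.1 i)) (hE.1 i)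
    have h2 : ∑ i, p i * ((1 - Real.sqrt (1 - concurrence (ψ i) ^ 2)) / 2)
        = (∑ i, p i) / 2 - (∑ i, p i * Real.sqrt (1 - concurrence (ψ i) ^ 2)) / 2 := by
      rw [Finset.sum_div, Finset.sum_div, ← Finset.sum_sub_distrib]
      exact Finset.sum_congr rfl fun i _ => by ring
    rw [h2, hs] at h1
    have h4 : (∑ i, p i * geomMeasure (ψ i)) ≤ geomCap ρ := by
      rw [hgeomCap]; exact le_csSup hGbdd ⟨n, p, ψ, hE, rfl⟩
    linarith
  have hlower : (1 - Real.sqrt (1 - concCap ρ ^ 2)) / 2 ≤ geomCap ρ := by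
    rcases le_or_gt (1 - 2 * geomCap ρ) 0 with h | h
    · have := Real.sqrt_nonneg (1 - concCap ρ ^ 2)
      linarith
    · have hs0 : 0 ≤ 1 - (1 - 2 * geomCap ρ) ^ 2 := by nlinarith
      have hcle : ∀ c ∈ SC, c ≤ Real.sqrt (1 - (1 - 2 * geomCap ρ) ^ 2) := by
        intro c hc
        obtain ⟨hc0, hc1⟩ := hCel c hc
        have h1 := hkey c hc
        have h2 : 1 - 2 * geomCap ρ ≤ Real.sqrt (1 - c ^ 2) := by linarith
        have hcs : 0 ≤ 1 - c ^ 2 := by nlinarith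
        have h3 : (1 - 2 * geomCap ρ) ^ 2 ≤ 1 - c ^ 2 := by
          have h5 := Real.sq_sqrt hcs
          nlinarith [Real.sqrt_nonneg (1 - c ^ 2)]
        have h4 : c ^ 2 ≤ 1 - (1 - 2 * geomCap ρ) ^ 2 := by linarith
        calc c = Real.sqrt (c ^ 2) := (Real.sqrt_sq hc0).symm
          _ ≤ _ := Real.sqrt_le_sqrt h4
      have hCle : concCap ρ ≤ Real.sqrt (1 - (1 - 2 * geomCap ρ) ^ 2) := by
        rw [hconcCap]; exact Real.sSup_le hcle (Real.sqrt_nonneg _)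
      have hCsq : concCap ρ ^ 2 ≤ 1 - (1 - 2 * geomCap ρ) ^ 2 := by
        have h6 := Real.sq_sqrt hs0
        nlinarith [Real.sqrt_nonneg (1 - (1 - 2 * geomCap ρ) ^ 2)]
      have h5 : 1 - 2 * geomCap ρ ≤ Real.sqrt (1 - concCap ρ ^ 2) := by
        have h6 : (1 - 2 * geomCap ρ) ^ 2 ≤ 1 - concCap ρ ^ 2 := by linarith
        calc 1 - 2 * geomCap ρ = Real.sqrt ((1 - 2 * geomCap ρ) ^ 2) :=
              (Real.sqrt_sq h.le).symm
          _ ≤ _ := Real.sqrt_le_sqrt h6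
      linarith
  exact ⟨hlower, hupper⟩
end

section
/- Let a = √ε |0⟩⟨1| and b = |0⟩⟨0| + √(1−ε)|1⟩⟨1| for ε ∈ [0,1] (Kraus operators of the qubit amplitude-damping channel). Then a†a + b†b = I, and ‖a‖_∞² + ‖b‖_∞² = 1 + ε = ‖a a† + b b†‖_∞. Hence this Kraus decomposition achieves the minimal value of ∑_i ‖A_i‖_∞² over all Kraus decompositions of the channel, namely σ(Λ) = 1 + ε, so the optimal success probability is 1/(1+ε). -/
open scoped Matrix.Norms.L2Operator
open Matrix

lemma diag2_norm (v : Fin 2 → ℂ) : ‖Matrix.diagonal v‖ = max ‖v 0‖ ‖v 1‖ := by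
  have hM : (0:ℝ) ≤ max ‖v 0‖ ‖v 1‖ := le_max_of_le_left (norm_nonneg _)
  apply le_antisymm
  · rw [Matrix.l2_opNorm_def]
    apply ContinuousLinearMap.opNorm_le_bound _ hM
    intro x
    rw [EuclideanSpace.norm_eq, EuclideanSpace.norm_eq]
    simp only [LinearEquiv.trans_apply, LinearMap.coe_toContinuousLinearMap',
      Matrix.toEuclideanLin_apply, PiLp.toLp_apply,
      Matrix.mulVec_diagonal, Fin.sum_univ_two, norm_mul]
    rw [show (‖v 0‖ ⊔ ‖v 1‖) * √(‖x 0‖ ^ 2 + ‖x 1‖ ^ 2)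
        = √((‖v 0‖ ⊔ ‖v 1‖)^2 * (‖x 0‖ ^ 2 + ‖x 1‖ ^ 2)) by
      rw [Real.sqrt_mul (by positivity), Real.sqrt_sq hM]]
    apply Real.sqrt_le_sqrt
    have h0 : ‖v 0‖ ≤ ‖v 0‖ ⊔ ‖v 1‖ := le_max_left _ _
    have h1 : ‖v 1‖ ≤ ‖v 0‖ ⊔ ‖v 1‖ := le_max_right _ _
    have e0 : ‖v 0‖^2 ≤ (‖v 0‖ ⊔ ‖v 1‖)^2 := pow_le_pow_left₀ (norm_nonneg _) h0 2
    have e1 : ‖v 1‖^2 ≤ (‖v 0‖ ⊔ ‖v 1‖)^2 := pow_le_pow_left₀ (norm_nonneg _) h1 2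
    have f0 := mul_le_mul_of_nonneg_right e0 (sq_nonneg ‖x 0‖)
    have f1 := mul_le_mul_of_nonneg_right e1 (sq_nonneg ‖x 1‖)
    nlinarith [f0, f1]
  · have key : ∀ i, ‖v i‖ ≤ ‖Matrix.diagonal v‖ := by
      intro i
      have h := Matrix.l2_opNorm_mulVec (Matrix.diagonal v) (EuclideanSpace.single i 1)
      simp only [EuclideanSpace.norm_single, norm_one, mul_one] at h
      have e : (EuclideanSpace.equiv (Fin 2) ℂ).symm
          (Matrix.diagonal v *ᵥ (EuclideanSpace.single i 1 : EuclideanSpace ℂ (Fin 2)))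
          = EuclideanSpace.single i (v i) := by
        ext j
        show (Matrix.diagonal v *ᵥ _) j = _
        rw [Matrix.mulVec_diagonal]
        by_cases hji : j = i <;> simp [hji, EuclideanSpace.single_apply]
      rw [e, EuclideanSpace.norm_single] at h
      exact h
    exact max_le (key 0) (key 1)

/-- The Kraus operators `a = √ε |0⟩⟨1|` and `b = |0⟩⟨0| + √(1-ε)|1⟩⟨1|` of the qubit
amplitude-damping channel form a Kraus decomposition, satisfy
`‖a‖² + ‖b‖² = 1 + ε = ‖a aᴴ + b bᴴ‖`, and achieve the minimum of `∑ i ‖B i‖²` over all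
Kraus decompositions `{B i}` of the channel. -/
theorem amplitude_damping_optimal (ε : ℝ) (hε0 : 0 ≤ ε) (hε1 : ε ≤ 1) :
    letI a : Matrix (Fin 2) (Fin 2) ℂ := !![0, (Real.sqrt ε : ℂ); 0, 0]
    letI b : Matrix (Fin 2) (Fin 2) ℂ := !![1, 0; 0, (Real.sqrt (1 - ε) : ℂ)]
    aᴴ * a + bᴴ * b = 1 ∧
    ‖a‖ ^ 2 + ‖b‖ ^ 2 = 1 + ε ∧
    ‖a * aᴴ + b * bᴴ‖ = 1 + ε ∧
    ∀ (n : ℕ) (B : Fin n → Matrix (Fin 2) (Fin 2) ℂ),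
      (∑ i, (B i)ᴴ * B i = 1) →
      (∀ ρ : Matrix (Fin 2) (Fin 2) ℂ,
        ∑ i, B i * ρ * (B i)ᴴ = a * ρ * aᴴ + b * ρ * bᴴ) →
      1 + ε ≤ ∑ i, ‖B i‖ ^ 2 := by
  set a : Matrix (Fin 2) (Fin 2) ℂ := !![0, (Real.sqrt ε : ℂ); 0, 0] with ha
  set b : Matrix (Fin 2) (Fin 2) ℂ := !![1, 0; 0, (Real.sqrt (1 - ε) : ℂ)] with hb
  have h1ε : (0:ℝ) ≤ 1 - ε := by linarith
  have hsa : Real.sqrt ε * Real.sqrt ε = ε := Real.mul_self_sqrt hε0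
  have hsb : Real.sqrt (1-ε) * Real.sqrt (1-ε) = 1-ε := Real.mul_self_sqrt h1ε
  have haa : aᴴ * a = Matrix.diagonal ![0, (ε:ℂ)] := by
    ext i j
    fin_cases i <;> fin_cases j <;>
      simp [ha, Matrix.mul_apply, Fin.sum_univ_two, Matrix.conjTranspose_apply,
        ← Complex.ofReal_mul, hsa]
  have hbb : bᴴ * b = Matrix.diagonal ![1, ((1-ε:ℝ):ℂ)] := by
    ext i j
    fin_cases i <;> fin_cases j <;>
      simp [hb, Matrix.mul_apply, Fin.sum_univ_two, Matrix.conjTranspose_apply,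
        ← Complex.ofReal_mul, hsb]
  have haaT : a * aᴴ = Matrix.diagonal ![(ε:ℂ), 0] := by
    ext i j
    fin_cases i <;> fin_cases j <;>
      simp [ha, Matrix.mul_apply, Fin.sum_univ_two, Matrix.conjTranspose_apply,
        ← Complex.ofReal_mul, hsa]
  have hbbT : b * bᴴ = Matrix.diagonal ![1, ((1-ε:ℝ):ℂ)] := by
    ext i j
    fin_cases i <;> fin_cases j <;>
      simp [hb, Matrix.mul_apply, Fin.sum_univ_two, Matrix.conjTranspose_apply,
        ← Complex.ofReal_mul, hsb]
  have hkraus : aᴴ * a + bᴴ * b = 1 := by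
    rw [haa, hbb]
    ext i j
    fin_cases i <;> fin_cases j <;> simp [Matrix.one_apply] <;> push_cast <;> ring
  have hna : ‖a‖^2 = ε := by
    have h := Matrix.l2_opNorm_conjTranspose_mul_self a
    rw [haa, diag2_norm] at h
    simp only [Matrix.cons_val_zero, Matrix.cons_val_one, Matrix.head_cons, norm_zero,
      Complex.norm_real] at h
    rw [sq, ← h, max_eq_right (norm_nonneg _), Real.norm_eq_abs, abs_of_nonneg hε0]
  have hnb : ‖b‖^2 = 1 := by
    have h := Matrix.l2_opNorm_conjTranspose_mul_self b
    rw [hbb, diag2_norm] at h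
    simp only [Matrix.cons_val_zero, Matrix.cons_val_one, Matrix.head_cons, norm_one,
      Complex.norm_real] at h
    rw [sq, ← h, Real.norm_eq_abs, abs_of_nonneg h1ε, max_eq_left (by linarith)]
  have hsumM : a * aᴴ + b * bᴴ = Matrix.diagonal ![((1+ε:ℝ):ℂ), ((1-ε:ℝ):ℂ)] := by
    rw [haaT, hbbT]
    ext i j
    fin_cases i <;> fin_cases j <;> simp <;> push_cast <;> ring
  have hnsum : ‖a * aᴴ + b * bᴴ‖ = 1 + ε := by
    rw [hsumM, diag2_norm]
    simp only [Matrix.cons_val_zero, Matrix.cons_val_one, Matrix.head_cons, Complex.norm_real,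
      Real.norm_eq_abs, abs_of_nonneg (by linarith : (0:ℝ) ≤ 1+ε), abs_of_nonneg h1ε]
    rw [max_eq_left (by linarith)]
  refine ⟨hkraus, by rw [hna, hnb]; ring, hnsum, ?_⟩
  intro n B hK hC
  have hBB : ∑ i, B i * (B i)ᴴ = a * aᴴ + b * bᴴ := by
    have := hC 1
    simpa using this
  calc 1 + ε = ‖∑ i, B i * (B i)ᴴ‖ := by rw [hBB, hnsum]
    _ ≤ ∑ i, ‖B i * (B i)ᴴ‖ := norm_sum_le _ _
    _ = ∑ i, ‖B i‖ ^ 2 := by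
        refine Finset.sum_congr rfl fun i _ => ?_
        have h := Matrix.l2_opNorm_conjTranspose_mul_self (B i)ᴴ
        rw [Matrix.conjTranspose_conjTranspose, Matrix.l2_opNorm_conjTranspose] at h
        rw [h, sq]
end
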